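/- Let F(1), G(1) ∈ ℝ³ with F(1) ≠ 0 and F(1)·G(1) ≥ 0, and define G(s) = G(1) + (s-1)F(1) for s ≥ 1. Then for all s ≥ 1, |G(s)|² ≥ (min(|G(1)|², |F(1)|²)/2) · s². -/

import Mathlib

/-- If `F(1) ≠ 0`, `F(1)·G(1) ≥ 0`, and `G(s) = G(1) + (s-1)F(1)` for `s ≥ 1`,
then `|G(s)|² ≥ (min(|G(1)|², |F(1)|²)/2) · s²` for all `s ≥ 1`. -/
theorem stmt0 (F1 G1 : EuclideanSpace ℝ (Fin 3)) (hF : F1 ≠ 0)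
    (hFG : (0:ℝ) ≤ inner ℝ F1 G1)
    (G : ℝ → EuclideanSpace ℝ (Fin 3))
    (hG : ∀ s : ℝ, 1 ≤ s → G s = G1 + (s - 1) • F1) :
    ∀ s : ℝ, 1 ≤ s → ‖G s‖ ^ 2 ≥ (min (‖G1‖ ^ 2) (‖F1‖ ^ 2) / 2) * s ^ 2 := by
  intro s hs
  rw [hG s hs]
  have h1 : ‖G1 + (s - 1) • F1‖ ^ 2
      = ‖G1‖ ^ 2 + 2 * ((s - 1) * inner ℝ G1 F1) + (s - 1) ^ 2 * ‖F1‖ ^ 2 := by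
    rw [norm_add_sq_real, real_inner_smul_right, norm_smul]
    have : |s - 1| = s - 1 := abs_of_nonneg (by linarith)
    rw [Real.norm_eq_abs, this]
    ring
  rw [h1]
  have hsym : (inner ℝ G1 F1 : ℝ) = inner ℝ F1 G1 := real_inner_comm _ _
  have hmin := min_le_left (‖G1‖ ^ 2) (‖F1‖ ^ 2)
  have hmin2 := min_le_right (‖G1‖ ^ 2) (‖F1‖ ^ 2)
  have hm0 : (0:ℝ) ≤ min (‖G1‖ ^ 2) (‖F1‖ ^ 2) := le_min (sq_nonneg _) (sq_nonneg _)
  nlinarith [sq_nonneg (s - 1), mul_nonneg hm0 (sq_nonneg (s - 2)),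
    mul_nonneg (by linarith : (0:ℝ) ≤ s - 1) hFG]
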